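/- Consider the two-variable subset-sum feasibility problem {(x₁,x₂) ∈ {0,1}² : 3x₁ + x₂ = 3}, whose LP relaxation is {(x₁,x₂) ∈ [0,1]² : 3x₁ + x₂ = 3}. The point (2/3, 1) is the unique point of the LP relaxation minimizing ℓ1 distance to (1,1), and also the unique point minimizing ℓ1 distance to (0,1); moreover round((2/3, 1)) = (1,1), and (1,1) and (0,1) are both infeasible for the integer problem while (1,0) is the unique feasible integer solution. -/
import Mathlib


/-- For the subset-sum instance `{(x₁,x₂) ∈ {0,1}² : 3x₁ + x₂ = 3}`:
`(2/3, 1)` is the unique ℓ1-closest point of the LP relaxation to `(1,1)` and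
to `(0,1)`, it rounds to `(1,1)`, and `(1,0)` is the unique feasible integer
solution (in particular `(1,1)` and `(0,1)` are infeasible). -/
theorem fp_stalls_example (P : Set (ℝ × ℝ))
    (hP : P = {q : ℝ × ℝ | 0 ≤ q.1 ∧ q.1 ≤ 1 ∧ 0 ≤ q.2 ∧ q.2 ≤ 1 ∧
      3 * q.1 + q.2 = 3}) :
    ((2/3, 1) : ℝ × ℝ) ∈ P ∧
    (∀ q ∈ P, |(1 : ℝ) - 2/3| + |(1 : ℝ) - 1| ≤ |1 - q.1| + |1 - q.2|) ∧
    (∀ q ∈ P, q ≠ ((2/3, 1) : ℝ × ℝ) →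
      |(1 : ℝ) - 2/3| + |(1 : ℝ) - 1| < |1 - q.1| + |1 - q.2|) ∧
    (∀ q ∈ P, |(0 : ℝ) - 2/3| + |(1 : ℝ) - 1| ≤ |0 - q.1| + |1 - q.2|) ∧
    (∀ q ∈ P, q ≠ ((2/3, 1) : ℝ × ℝ) →
      |(0 : ℝ) - 2/3| + |(1 : ℝ) - 1| < |0 - q.1| + |1 - q.2|) ∧
    ((⌊(2/3 : ℝ) + 1/2⌋ : ℤ) = 1 ∧ (⌊(1 : ℝ) + 1/2⌋ : ℤ) = 1) ∧
    (∀ x1 x2 : ℝ, (x1 = 0 ∨ x1 = 1) → (x2 = 0 ∨ x2 = 1) →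
      (3 * x1 + x2 = 3 ↔ x1 = 1 ∧ x2 = 0)) := by
  subst hP
  have key : ∀ q : ℝ × ℝ, q ∈ {q : ℝ × ℝ | 0 ≤ q.1 ∧ q.1 ≤ 1 ∧ 0 ≤ q.2 ∧ q.2 ≤ 1 ∧
      3 * q.1 + q.2 = 3} → 2/3 ≤ q.1 ∧ (q ≠ ((2/3,1) : ℝ × ℝ) → 2/3 < q.1) := by
    rintro ⟨a, b⟩ ⟨h1, h2, h3, h4, h5⟩
    simp only at h1 h2 h3 h4 h5 ⊢
    constructor
    · linarith
    · intro hne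
      rcases lt_or_eq_of_le (show (2:ℝ)/3 ≤ a by linarith) with h | h
      · exact h
      · exfalso; apply hne; rw [Prod.ext_iff]; constructor <;> simp <;> linarith
  have hL1 : |(1:ℝ) - 2/3| + |(1:ℝ) - 1| = 1/3 := by
    rw [abs_of_nonneg (by norm_num), abs_of_nonneg (by norm_num)]; norm_num
  have hL2 : |(0:ℝ) - 2/3| + |(1:ℝ) - 1| = 2/3 := by
    rw [abs_of_nonpos (by norm_num), abs_of_nonneg (by norm_num)]; norm_num
  refine ⟨⟨by norm_num, by norm_num, by norm_num, by norm_num, by norm_num⟩, ?_, ?_, ?_, ?_,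
    ⟨by norm_num [Int.floor_eq_iff], by norm_num [Int.floor_eq_iff]⟩, ?_⟩
  · intro q hq
    obtain ⟨h1, h2, h3, h4, h5⟩ := hq
    have hk := (key q ⟨h1, h2, h3, h4, h5⟩).1
    rcases abs_cases ((1:ℝ) - q.1) with ⟨e, _⟩ | ⟨e, _⟩ <;>
      rcases abs_cases ((1:ℝ) - q.2) with ⟨f, _⟩ | ⟨f, _⟩ <;>
      rw [hL1, e, f] <;> linarith
  · intro q hq hne
    obtain ⟨h1, h2, h3, h4, h5⟩ := hq
    have hk := (key q ⟨h1, h2, h3, h4, h5⟩).2 hne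
    rcases abs_cases ((1:ℝ) - q.1) with ⟨e, _⟩ | ⟨e, _⟩ <;>
      rcases abs_cases ((1:ℝ) - q.2) with ⟨f, _⟩ | ⟨f, _⟩ <;>
      rw [hL1, e, f] <;> linarith
  · intro q hq
    obtain ⟨h1, h2, h3, h4, h5⟩ := hq
    have hk := (key q ⟨h1, h2, h3, h4, h5⟩).1
    rcases abs_cases ((0:ℝ) - q.1) with ⟨e, _⟩ | ⟨e, _⟩ <;>
      rcases abs_cases ((1:ℝ) - q.2) with ⟨f, _⟩ | ⟨f, _⟩ <;>
      rw [hL2, e, f] <;> linarith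
  · intro q hq hne
    obtain ⟨h1, h2, h3, h4, h5⟩ := hq
    have hk := (key q ⟨h1, h2, h3, h4, h5⟩).2 hne
    rcases abs_cases ((0:ℝ) - q.1) with ⟨e, _⟩ | ⟨e, _⟩ <;>
      rcases abs_cases ((1:ℝ) - q.2) with ⟨f, _⟩ | ⟨f, _⟩ <;>
      rw [hL2, e, f] <;> linarith
  · rintro x1 x2 (rfl | rfl) (rfl | rfl) <;> norm_num
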